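/- arXiv:1311.6991 — 4 statements merged into one kernel-verified Lean document; each statement's English description precedes it below -/
import Mathlib

section
/- Let J_i = Σ_{j<i} (j i) denote the i-th Jucys–Murphy element in the group algebra ℂS_n. Then the product T(x) = ∏_{i=1}^{n} (x + J_i) equals Σ_{σ ∈ S_n} x^{l(σ)} σ, where l(σ) is the number of cycles of σ. -/
open Polynomial

/-- The number of cycles of a permutation of `Fin n`, counting fixed points. -/
def numCycles {n : ℕ} (σ : Equiv.Perm (Fin n)) : ℕ :=
  Multiset.card σ.cycleType + (n - σ.cycleType.sum)

/-- The `i`-th Jucys–Murphy element `J_i = Σ_{j<i} (j i)` in `ℂ S_n`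
(0-based: `J_{i+1}` is `jucysMurphy n i`, and `jucysMurphy n 0 = 0`). -/
noncomputable def jucysMurphy (n : ℕ) (i : Fin n) :
    MonoidAlgebra ℂ (Equiv.Perm (Fin n)) :=
  ∑ j ∈ Finset.univ.filter (fun j : Fin n => j < i),
    MonoidAlgebra.of ℂ (Equiv.Perm (Fin n)) (Equiv.swap j i)

namespace JMaux

open Equiv Equiv.Perm Finset

variable {α : Type*} [DecidableEq α] [Fintype α]

theorem support_cycle_insert {c : Perm α} (hc : c.IsCycle) {p t : α}
    (hp : p ∈ c.support) (ht : t ∉ c.support) :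
    (c * Equiv.swap p t).support = insert t c.support := by
  have hpt : p ≠ t := fun h => ht (h ▸ hp)
  have hct : c t = t := notMem_support.mp ht
  have hcp : c p ≠ p := mem_support.mp hp
  have hcpt : c p ≠ t := fun h => ht (h ▸ apply_mem_support.mpr hp)
  ext y
  rcases eq_or_ne y t with rfl | hyt
  · exact iff_of_true (mem_support.mpr (by simpa using hcpt)) (Finset.mem_insert_self _ _)
  rcases eq_or_ne y p with rfl | hyp
  · exact iff_of_true (mem_support.mpr (by simpa [mul_apply, hct] using hpt.symm))
      (Finset.mem_insert_of_mem hp)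
  · simp only [mem_support, mul_apply, swap_apply_of_ne_of_ne hyp hyt, Finset.mem_insert,
      hyt, false_or]

theorem isCycle_cycle_insert {c : Perm α} (hc : c.IsCycle) {p t : α}
    (hp : p ∈ c.support) (ht : t ∉ c.support) :
    (c * Equiv.swap p t).IsCycle := by
  have hpt : p ≠ t := fun h => ht (h ▸ hp)
  have hct : c t = t := notMem_support.mp ht
  have hcp : c p ≠ p := mem_support.mp hp
  set g := c * Equiv.swap p t with hg
  have hgp : g p = t := by simp [hg, mul_apply, swap_apply_left, hct]
  have hgt : g t = c p := by simp [hg, mul_apply, swap_apply_right]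
  have claim : ∀ j : ℕ, ∃ k : ℕ, (g ^ k) p = (c ^ j) p := by
    intro j
    induction j with
    | zero => exact ⟨0, rfl⟩
    | succ j ih =>
      obtain ⟨k, hk⟩ := ih
      rcases eq_or_ne ((c ^ j) p) p with h | h
      · refine ⟨2, ?_⟩
        have h2 : (g ^ 2) p = g (g p) := by rw [pow_succ, pow_one, mul_apply]
        rw [h2, hgp, hgt, pow_succ', mul_apply, h]
      · have hmem : (c ^ j) p ∈ c.support := pow_apply_mem_support.mpr hp
        have hnt : (c ^ j) p ≠ t := fun hh => ht (hh ▸ hmem)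
        refine ⟨k + 1, ?_⟩
        rw [pow_succ', mul_apply, hk, pow_succ', mul_apply]
        show c (Equiv.swap p t ((c ^ j) p)) = _
        rw [swap_apply_of_ne_of_ne h hnt, mul_apply]
  refine ⟨p, by rw [hgp]; exact hpt.symm, fun y hy => ?_⟩
  have hy' : y ∈ g.support := mem_support.mpr hy
  rw [support_cycle_insert hc hp ht] at hy'
  rcases Finset.mem_insert.mp hy' with rfl | hy'
  · exact ⟨1, by simpa using hgp⟩
  · obtain ⟨j, hj⟩ := hc.exists_pow_eq hcp (mem_support.mp hy')
    obtain ⟨k, hk⟩ := claim j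
    exact ⟨k, by rw [zpow_natCast, hk, hj]⟩

theorem cycleType_mul_swap_merge {σ : Perm α} {p t : α}
    (hp : p ∈ σ.support) (ht : t ∉ σ.support) :
    ∃ (M : Multiset ℕ) (m : ℕ), σ.cycleType = m ::ₘ M ∧
      (σ * Equiv.swap p t).cycleType = (m + 1) ::ₘ M := by
  set c := σ.cycleOf p with hcdef
  have hcycle : c.IsCycle := isCycle_cycleOf σ (mem_support.mp hp)
  have hmem : c ∈ σ.cycleFactorsFinset := cycleOf_mem_cycleFactorsFinset_iff.mpr hp
  set ρ := σ * c⁻¹ with hρdef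
  have hd : Perm.Disjoint ρ c := disjoint_mul_inv_of_mem_cycleFactorsFinset hmem
  have hσeq : σ = ρ * c := by rw [hρdef, inv_mul_cancel_right]
  have hpc : p ∈ c.support := by
    rw [hcdef, mem_support_cycleOf_iff]
    exact ⟨SameCycle.refl _ _, hp⟩
  have htc : t ∉ c.support := fun h => ht (support_cycleOf_le σ p h)
  have hsupp : σ.support = ρ.support ∪ c.support := by rw [hσeq, hd.support_mul]
  have htρ : t ∉ ρ.support := fun h => ht (hsupp ▸ Finset.mem_union_left _ h)
  have hg : (c * Equiv.swap p t).IsCycle := isCycle_cycle_insert hcycle hpc htc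
  have hgs : (c * Equiv.swap p t).support = insert t c.support :=
    support_cycle_insert hcycle hpc htc
  have hd2 : Perm.Disjoint ρ (c * Equiv.swap p t) := by
    rw [disjoint_iff_disjoint_support, hgs]
    rw [disjoint_iff_disjoint_support] at hd
    exact Finset.disjoint_insert_right.mpr ⟨htρ, hd⟩
  refine ⟨ρ.cycleType, c.support.card, ?_, ?_⟩
  · rw [hσeq, Equiv.Perm.Disjoint.cycleType_mul hd, hcycle.cycleType]
    rw [add_comm]
    rfl
  · rw [show σ * Equiv.swap p t = ρ * (c * Equiv.swap p t) by rw [hσeq, mul_assoc],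
      Equiv.Perm.Disjoint.cycleType_mul hd2, hg.cycleType, hgs, Finset.card_insert_of_notMem htc]
    rw [add_comm]
    rfl

/-- the equivalence between `Fin n` and the non-`last` elements of `Fin (n+1)` -/
def lastEquiv (n : ℕ) : Fin n ≃ {x : Fin (n + 1) // x ≠ Fin.last n} where
  toFun i := ⟨i.castSucc, (Fin.castSucc_lt_last i).ne⟩
  invFun x := x.1.castPred x.2
  left_inv i := by simp
  right_inv x := by simp

/-- extension of a permutation of `Fin n` to `Fin (n+1)` fixing `last n` -/
def extHom (n : ℕ) : Perm (Fin n) →* Perm (Fin (n + 1)) :=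
  Equiv.Perm.extendDomainHom (lastEquiv n)

theorem extHom_apply_castSucc {n : ℕ} (e : Perm (Fin n)) (i : Fin n) :
    extHom n e i.castSucc = (e i).castSucc :=
  e.extendDomain_apply_image (lastEquiv n) i

theorem extHom_apply_last {n : ℕ} (e : Perm (Fin n)) :
    extHom n e (Fin.last n) = Fin.last n :=
  e.extendDomain_apply_not_subtype (lastEquiv n) (by simp)

theorem extHom_cycleType {n : ℕ} (e : Perm (Fin n)) :
    (extHom n e).cycleType = e.cycleType :=
  cycleType_extendDomain (lastEquiv n)

theorem extHom_swap {n : ℕ} (a b : Fin n) :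
    extHom n (Equiv.swap a b) = Equiv.swap a.castSucc b.castSucc := by
  ext x
  induction x using Fin.lastCases with
  | last =>
    rw [extHom_apply_last, Equiv.swap_apply_of_ne_of_ne (Fin.castSucc_lt_last a).ne'
      (Fin.castSucc_lt_last b).ne']
  | cast i =>
    rw [extHom_apply_castSucc]
    rcases eq_or_ne i a with rfl | hia
    · rw [Equiv.swap_apply_left, Equiv.swap_apply_left]
    rcases eq_or_ne i b with rfl | hib
    · rw [Equiv.swap_apply_right, Equiv.swap_apply_right]
    · rw [Equiv.swap_apply_of_ne_of_ne hia hib,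
        Equiv.swap_apply_of_ne_of_ne (by simpa [Fin.castSucc_inj] using hia)
          (by simpa [Fin.castSucc_inj] using hib)]

theorem last_not_mem_support_extHom {n : ℕ} (e : Perm (Fin n)) :
    Fin.last n ∉ (extHom n e).support :=
  Equiv.Perm.notMem_support.mpr (extHom_apply_last e)

theorem numCycles_extHom {n : ℕ} (e : Perm (Fin n)) :
    numCycles (extHom n e) = numCycles e + 1 := by
  have hs : e.cycleType.sum ≤ n := by
    rw [Equiv.Perm.sum_cycleType]
    simpa using Finset.card_le_univ e.support
  simp only [numCycles, extHom_cycleType]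
  omega

theorem numCycles_mul_swap {n : ℕ} {σ : Perm (Fin (n + 1))}
    (hσ : Fin.last n ∉ σ.support) {p : Fin (n + 1)} (hp : p ≠ Fin.last n) :
    numCycles (σ * Equiv.swap p (Fin.last n)) + 1 = numCycles σ := by
  have hsub : σ.support ⊆ Finset.univ.erase (Fin.last n) := fun x hx =>
    Finset.mem_erase.mpr ⟨fun h => hσ (h ▸ hx), Finset.mem_univ x⟩
  have hcard : σ.support.card ≤ n := by
    have := Finset.card_le_card hsub
    rwa [Finset.card_erase_of_mem (Finset.mem_univ _), Finset.card_univ,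
      Fintype.card_fin] at this
  have hsum : σ.cycleType.sum = σ.support.card := Equiv.Perm.sum_cycleType σ
  by_cases hps : p ∈ σ.support
  · obtain ⟨M, m, h1, h2⟩ := cycleType_mul_swap_merge hps hσ
    have hm : m + M.sum ≤ n := by
      have : σ.cycleType.sum = m + M.sum := by rw [h1, Multiset.sum_cons]
      omega
    simp only [numCycles, h1, h2, Multiset.card_cons, Multiset.sum_cons]
    omega
  · have hd : Perm.Disjoint σ (Equiv.swap p (Fin.last n)) := by
      rw [disjoint_iff_disjoint_support, Equiv.Perm.support_swap hp]
      simp only [Finset.disjoint_insert_right, Finset.disjoint_singleton_right]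
      exact ⟨hps, hσ⟩
    have hcard2 : σ.support.card ≤ n - 1 := by
      have hsub2 : σ.support ⊆ (Finset.univ.erase (Fin.last n)).erase p := fun x hx =>
        Finset.mem_erase.mpr ⟨fun h => hps (h ▸ hx), hsub hx⟩
      have := Finset.card_le_card hsub2
      rwa [Finset.card_erase_of_mem (Finset.mem_erase.mpr ⟨hp, Finset.mem_univ _⟩),
        Finset.card_erase_of_mem (Finset.mem_univ _), Finset.card_univ,
        Fintype.card_fin] at this
    have hct : (σ * Equiv.swap p (Fin.last n)).cycleType = σ.cycleType + {2} := by
      rw [Equiv.Perm.Disjoint.cycleType_mul hd, (Equiv.Perm.isCycle_swap hp).cycleType,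
        Equiv.Perm.card_support_swap hp]
    simp only [numCycles, hct, Multiset.card_add, Multiset.sum_add]
    simp only [Multiset.card_singleton, Multiset.sum_singleton]
    omega

/-- the map `(e, p) ↦ ext e * swap p last` -/
def F (n : ℕ) : Perm (Fin n) × Fin (n + 1) → Perm (Fin (n + 1)) :=
  fun ep => extHom n ep.1 * Equiv.swap ep.2 (Fin.last n)

theorem F_bijective (n : ℕ) : Function.Bijective (F n) := by
  rw [Fintype.bijective_iff_injective_and_card]
  constructor
  · rintro ⟨e, p⟩ ⟨e', p'⟩ h
    have key : ∀ (f : Perm (Fin n)) (q : Fin (n + 1)),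
        (extHom n f * Equiv.swap q (Fin.last n))⁻¹ (Fin.last n) = q := by
      intro f q
      rw [mul_inv_rev, mul_apply]
      have : (extHom n f)⁻¹ (Fin.last n) = Fin.last n := by
        rw [Equiv.Perm.inv_eq_iff_eq, extHom_apply_last]
      rw [this, Equiv.swap_inv, Equiv.swap_apply_right]
    have h' : extHom n e * Equiv.swap p (Fin.last n) =
        extHom n e' * Equiv.swap p' (Fin.last n) := h
    have hpq : p = p' := by
      have h1 := key e p
      rw [h', key e' p'] at h1
      exact h1.symm
    subst hpq
    have he : extHom n e = extHom n e' := mul_right_cancel h'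
    have := Equiv.Perm.extendDomainHom_injective (lastEquiv n) he
    simp [this]
  · simp [Fintype.card_prod, Fintype.card_perm, Fintype.card_fin, Nat.factorial_succ, mul_comm]

theorem phi_of (n : ℕ) (g : Perm (Fin n)) :
    MonoidAlgebra.mapDomainRingHom ℂ (extHom n) (MonoidAlgebra.of ℂ _ g) =
      MonoidAlgebra.of ℂ _ (extHom n g) := by
  simp [MonoidAlgebra.of_apply, MonoidAlgebra.mapDomainRingHom_apply,
    Finsupp.mapDomain_single]

theorem filter_lt_castSucc (n : ℕ) (i : Fin n) :
    (Finset.univ.filter (fun j : Fin (n + 1) => j < i.castSucc)) =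
      (Finset.univ.filter (fun j : Fin n => j < i)).image Fin.castSucc := by
  ext j
  simp only [Finset.mem_filter, Finset.mem_image, Finset.mem_univ, true_and]
  constructor
  · intro hj
    have hj' : j.val < i.val := hj
    exact ⟨⟨j.val, by omega⟩, hj', by ext; rfl⟩
  · rintro ⟨a, ha, rfl⟩
    exact ha

theorem filter_lt_last (n : ℕ) :
    (Finset.univ.filter (fun j : Fin (n + 1) => j < Fin.last n)) =
      Finset.univ.image Fin.castSucc := by
  ext j
  simp only [Finset.mem_filter, Finset.mem_image, Finset.mem_univ, true_and]
  constructor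
  · intro hj
    have hj' : j.val < n := hj
    exact ⟨⟨j.val, hj'⟩, by ext; rfl⟩
  · rintro ⟨a, rfl⟩
    exact Fin.castSucc_lt_last a

theorem jm_castSucc (n : ℕ) (i : Fin n) :
    jucysMurphy (n + 1) i.castSucc =
      MonoidAlgebra.mapDomainRingHom ℂ (extHom n) (jucysMurphy n i) := by
  rw [jucysMurphy, jucysMurphy, map_sum, filter_lt_castSucc,
    Finset.sum_image (fun a _ b _ h => Fin.castSucc_injective n h)]
  refine Finset.sum_congr rfl fun j _ => ?_
  rw [phi_of, extHom_swap]

theorem jm_last (n : ℕ) :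
    jucysMurphy (n + 1) (Fin.last n) =
      ∑ i : Fin n, MonoidAlgebra.of ℂ (Equiv.Perm (Fin (n + 1)))
        (Equiv.swap i.castSucc (Fin.last n)) := by
  rw [jucysMurphy, filter_lt_last,
    Finset.sum_image (fun a _ b _ h => Fin.castSucc_injective n h)]

end JMaux

open JMaux Equiv Equiv.Perm in
/-- `T(x) = ∏_{i=1}^{n} (x + J_i) = Σ_{σ ∈ S_n} x^{l(σ)} σ`, where `J_i` are the
Jucys–Murphy elements and `l(σ)` is the number of cycles of `σ`; an identity in
the polynomial ring over `ℂ S_n` (the product is taken in order, but the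
factors commute). -/
theorem prod_X_add_jucysMurphy (n : ℕ) :
    ((List.finRange n).map fun i =>
        (X : Polynomial (MonoidAlgebra ℂ (Equiv.Perm (Fin n)))) +
          C (jucysMurphy n i)).prod =
      ∑ σ : Equiv.Perm (Fin n),
        C (MonoidAlgebra.of ℂ (Equiv.Perm (Fin n)) σ) *
          (X : Polynomial (MonoidAlgebra ℂ (Equiv.Perm (Fin n)))) ^ numCycles σ := by
  induction n with
  | zero =>
    rw [List.finRange_zero, List.map_nil, List.prod_nil]
    rw [Fintype.sum_subsingleton _ 1]
    simp [numCycles, Equiv.Perm.cycleType_one]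
    rw [← MonoidAlgebra.one_def, map_one]
  | succ n ih =>
    set φ := MonoidAlgebra.mapDomainRingHom ℂ (extHom n) with hφ
    -- LHS
    rw [List.finRange_succ_last, List.map_append, List.prod_append, List.map_map,
      List.map_singleton, List.prod_singleton]
    have hA : ((List.finRange n).map ((fun i =>
          (X : Polynomial (MonoidAlgebra ℂ (Equiv.Perm (Fin (n + 1))))) +
            C (jucysMurphy (n + 1) i)) ∘ Fin.castSucc)).prod
        = ∑ e : Equiv.Perm (Fin n),
            C (MonoidAlgebra.of ℂ _ (extHom n e)) * X ^ numCycles e := by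
      calc ((List.finRange n).map ((fun i =>
              (X : Polynomial (MonoidAlgebra ℂ (Equiv.Perm (Fin (n + 1))))) +
                C (jucysMurphy (n + 1) i)) ∘ Fin.castSucc)).prod
          = ((List.finRange n).map (fun i => Polynomial.mapRingHom φ
              ((X : Polynomial (MonoidAlgebra ℂ (Equiv.Perm (Fin n)))) +
                C (jucysMurphy n i)))).prod := by
            congr 1
            refine List.map_congr_left fun i _ => ?_
            simp only [Function.comp_apply, Polynomial.coe_mapRingHom, Polynomial.map_add,
              Polynomial.map_X, Polynomial.map_C, jm_castSucc, hφ]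
        _ = Polynomial.mapRingHom φ (((List.finRange n).map fun i =>
              (X : Polynomial (MonoidAlgebra ℂ (Equiv.Perm (Fin n)))) +
                C (jucysMurphy n i)).prod) := by
            rw [map_list_prod, List.map_map]
            rfl
        _ = ∑ e : Equiv.Perm (Fin n),
              C (MonoidAlgebra.of ℂ _ (extHom n e)) * X ^ numCycles e := by
            rw [ih, map_sum]
            refine Finset.sum_congr rfl fun e _ => ?_
            simp only [map_mul, map_pow, Polynomial.coe_mapRingHom, Polynomial.map_C,
              Polynomial.map_X, hφ, phi_of]
    rw [hA, jm_last]
    -- RHS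
    rw [← Fintype.sum_bijective (F n) (F_bijective n)
      (fun ep => C (MonoidAlgebra.of ℂ _ (F n ep)) * X ^ numCycles (F n ep))
      (fun σ => C (MonoidAlgebra.of ℂ _ σ) * X ^ numCycles σ) (fun ep => rfl)]
    rw [Fintype.sum_prod_type, Finset.sum_mul]
    refine Finset.sum_congr rfl fun e _ => ?_
    rw [Fin.sum_univ_castSucc (f := fun p => C (MonoidAlgebra.of ℂ _ (F n (e, p))) *
      X ^ numCycles (F n (e, p)))]
    have hFlast : F n (e, Fin.last n) = extHom n e := by
      rw [show F n (e, Fin.last n) = extHom n e * Equiv.swap (Fin.last n) (Fin.last n) from rfl,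
        Equiv.swap_self]
      exact mul_one _
    have hterm2 : C (MonoidAlgebra.of ℂ _ (F n (e, Fin.last n))) *
        X ^ numCycles (F n (e, Fin.last n)) =
        C (MonoidAlgebra.of ℂ _ (extHom n e)) * X ^ numCycles e * X := by
      rw [hFlast, numCycles_extHom, pow_succ, mul_assoc]
    have hterm1 : ∀ i : Fin n, C (MonoidAlgebra.of ℂ _ (F n (e, i.castSucc))) *
        X ^ numCycles (F n (e, i.castSucc)) =
        C (MonoidAlgebra.of ℂ _ (extHom n e)) * X ^ numCycles e *
          C (MonoidAlgebra.of ℂ _ (Equiv.swap i.castSucc (Fin.last n))) := by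
      intro i
      have hnc : numCycles (extHom n e * Equiv.swap i.castSucc (Fin.last n)) = numCycles e := by
        have h1 := numCycles_mul_swap (last_not_mem_support_extHom e)
          (p := i.castSucc) (Fin.castSucc_lt_last i).ne
        rw [numCycles_extHom] at h1
        omega
      rw [show F n (e, i.castSucc) = extHom n e * Equiv.swap i.castSucc (Fin.last n)
        from rfl, hnc, map_mul, C_mul, mul_assoc, mul_assoc, Polynomial.X_pow_mul]
    rw [hterm2, Finset.sum_congr rfl fun i _ => hterm1 i]
    rw [mul_add, map_sum, Finset.mul_sum]
    exact add_comm _ _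
end

section
/- Let m, n be positive integers, λ a partition of n, and θ a partition of mn that is not m-splittable (i.e. has nonempty m-core). Then the irreducible character of S_{mn} indexed by θ vanishes on the conjugacy class of cycle type mλ: χ^θ_{mλ} = 0. -/
/-- The `i`-th part (0-based) of the partition described by the multiset `s`,
in weakly decreasing order, padded with zeros. -/
def sortedPart (s : Multiset ℕ) (i : ℕ) : ℕ :=
  ((s.sort (· ≤ ·)).reverse).getD i 0

/-- The set `S_λ = {λ_i - i : i ≥ 1}` of the partition described by the
multiset `s`. -/
def partSetM (s : Multiset ℕ) : Set ℤ :=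
  Set.range fun i : ℕ => (sortedPart s i : ℤ) - ((i : ℤ) + 1)

/-- The charge condition on a set `S ⊂ ℤ`. -/
def ChargeCond (S : Set ℤ) : Prop :=
  (S ∩ {k : ℤ | 0 ≤ k}).Finite ∧ ({k : ℤ | k < 0} \ S).Finite ∧
    (S ∩ {k : ℤ | 0 ≤ k}).ncard = ({k : ℤ | k < 0} \ S).ncard

/-- A partition (multiset of positive parts) is `m`-splittable if every residue
class of its associated set `S_θ` modulo `m` satisfies the charge condition
(equivalently, it has empty `m`-core). -/
def MSplittable (m : ℕ) (s : Multiset ℕ) : Prop :=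
  ∀ r : ℕ, r < m → ChargeCond {a : ℤ | (m : ℤ) * a + (r : ℤ) ∈ partSetM s}

/-- The irreducible character `χ^λ_μ` of a symmetric group, via the Frobenius
formula: the coefficient of `x^{λ+δ}` (with `δ = (N-1, N-2, …, 0)`) in the
product of the Vandermonde determinant `∏_{i<j}(x_i - x_j)` with the power sums
`p_μ = ∏_k p_{μ_k}`, in `N` variables. Here `λ, μ` are partitions of the same
integer with at most `N` parts. -/
noncomputable def chiChar (N : ℕ) (lam mu : Multiset ℕ) : ℤ :=
  MvPolynomial.coeff
    (Finsupp.equivFunOnFinite.symm fun i : Fin N => sortedPart lam i + (N - 1 - (i : ℕ)))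
    ((∏ i : Fin N, ∏ j ∈ Finset.Ioi i, (MvPolynomial.X i - MvPolynomial.X j)) *
      (mu.map fun k => ∑ i : Fin N, (MvPolynomial.X i : MvPolynomial (Fin N) ℤ) ^ k).prod)

open MvPolynomial Finset

lemma prodXpow {N : ℕ} (e : Fin N → ℕ) :
    (∏ i : Fin N, (X i : MvPolynomial (Fin N) ℤ) ^ e i)
      = monomial (Finsupp.equivFunOnFinite.symm e) 1 := by
  rw [← MvPolynomial.prod_X_pow_eq_monomial]
  refine (Finset.prod_subset (Finset.subset_univ _) ?_).symm
  intro x _ hx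
  have hex : e x = 0 := by simpa using (Finsupp.notMem_support_iff.mp hx)
  simp [hex]

lemma vand_support {N : ℕ} (d : Fin N →₀ ℕ)
    (hd : MvPolynomial.coeff d (∏ i : Fin N, ∏ j ∈ Finset.Ioi i,
      (MvPolynomial.X i - MvPolynomial.X j : MvPolynomial (Fin N) ℤ)) ≠ 0) :
    ∃ σ : Equiv.Perm (Fin N), ∀ j, d j = ((σ j : Fin N) : ℕ) := by
  have hv : (∏ i : Fin N, ∏ j ∈ Finset.Ioi i,
      (MvPolynomial.X i - MvPolynomial.X j : MvPolynomial (Fin N) ℤ)) =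
      (-1 : MvPolynomial (Fin N) ℤ) ^ (∑ i : Fin N, (Finset.Ioi i).card) *
        Matrix.det (Matrix.vandermonde fun i : Fin N => (X i : MvPolynomial (Fin N) ℤ)) := by
    rw [Matrix.det_vandermonde, ← Finset.prod_pow_eq_pow_sum, ← Finset.prod_mul_distrib]
    refine Finset.prod_congr rfl fun i _ => ?_
    rw [← Finset.prod_const, ← Finset.prod_mul_distrib]
    exact Finset.prod_congr rfl fun j _ => by ring
  rw [hv] at hd
  have hd2 : MvPolynomial.coeff d
      (Matrix.det (Matrix.vandermonde fun i : Fin N => (X i : MvPolynomial (Fin N) ℤ))) ≠ 0 := by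
    rcases neg_one_pow_eq_or (MvPolynomial (Fin N) ℤ) (∑ i : Fin N, (Finset.Ioi i).card) with h1 | h1 <;>
      rw [h1] at hd
    · simpa using hd
    · intro h; apply hd; simp [h]
  rw [Matrix.det_apply, MvPolynomial.coeff_sum] at hd2
  obtain ⟨σ, -, hσ⟩ := Finset.exists_ne_zero_of_sum_ne_zero hd2
  refine ⟨σ⁻¹, fun j => ?_⟩
  rw [Units.smul_def, MvPolynomial.coeff_smul] at hσ
  have hσ2 : MvPolynomial.coeff d (∏ i : Fin N,
      Matrix.vandermonde (fun i : Fin N => (X i : MvPolynomial (Fin N) ℤ)) (σ i) i) ≠ 0 :=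
    right_ne_zero_of_smul hσ
  have hre : (∏ i : Fin N,
      Matrix.vandermonde (fun i : Fin N => (X i : MvPolynomial (Fin N) ℤ)) (σ i) i)
      = ∏ i : Fin N, (X i : MvPolynomial (Fin N) ℤ) ^ ((σ⁻¹ i : Fin N) : ℕ) := by
    rw [← Equiv.prod_comp σ (fun i => (X i : MvPolynomial (Fin N) ℤ) ^ ((σ⁻¹ i : Fin N) : ℕ))]
    exact Finset.prod_congr rfl fun i _ => by simp [Matrix.vandermonde]
  rw [hre, prodXpow, MvPolynomial.coeff_monomial] at hσ2
  have : (Finsupp.equivFunOnFinite.symm fun i : Fin N => ((σ⁻¹ i : Fin N) : ℕ)) = d := by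
    by_contra h; rw [if_neg h] at hσ2; exact hσ2 rfl
  rw [← this]
  simp


lemma count_residues (m n : ℕ) (hm : 0 < m) (r : ZMod m) :
    ((Finset.univ : Finset (Fin (m * n))).filter
      (fun i : Fin (m * n) => ((i : ℕ) : ZMod m) = r)).card = n := by
  haveI : NeZero m := ⟨hm.ne'⟩
  apply Finset.card_eq_of_bijective (fun b hb => ⟨r.val + m * b, by
    calc r.val + m * b < m + m * b := by
          have := ZMod.val_lt r; omega
      _ = m * (b + 1) := by ring
      _ ≤ m * n := Nat.mul_le_mul_left m hb⟩)
  · intro i hi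
    have hmem : ((i : ℕ) : ZMod m) = r := (Finset.mem_filter.mp hi).2
    have hv : (i : ℕ) % m = r.val := by rw [← hmem, ZMod.val_natCast]
    have hlt : (i : ℕ) < m * n := i.2
    refine ⟨(i : ℕ) / m, Nat.div_lt_of_lt_mul (by omega), ?_⟩
    apply Fin.ext
    show r.val + m * ((i : ℕ) / m) = (i : ℕ)
    have h3 := Nat.mod_add_div (i : ℕ) m
    omega
  · intro b hb
    simp only [Finset.mem_filter, Finset.mem_univ, true_and]
    show ((r.val + m * b : ℕ) : ZMod m) = r
    push_cast
    simp [ZMod.natCast_self, ZMod.natCast_val, ZMod.cast_id]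
  · intro b b' hb hb' h
    rw [Fin.mk.injEq] at h
    exact Nat.eq_of_mul_eq_mul_left hm (by omega)


lemma psum_support (m : ℕ) {N : ℕ} (lam : Multiset ℕ) (e : Fin N →₀ ℕ)
    (he : MvPolynomial.coeff e
      ((lam.map fun k => ∑ i : Fin N, (MvPolynomial.X i : MvPolynomial (Fin N) ℤ) ^ (m * k)).prod)
      ≠ 0) :
    ∀ i, m ∣ e i := by
  induction lam using Multiset.induction_on generalizing e with
  | empty =>
    simp only [Multiset.map_zero, Multiset.prod_zero, MvPolynomial.coeff_one] at he
    intro i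
    have : e = 0 := by by_contra h; rw [if_neg (fun h0 => h h0.symm)] at he; exact he rfl
    simp [this]
  | cons a s ih =>
    rw [Multiset.map_cons, Multiset.prod_cons, MvPolynomial.coeff_mul] at he
    obtain ⟨x, hx, hne⟩ := Finset.exists_ne_zero_of_sum_ne_zero he
    have hadd : x.1 + x.2 = e := Finset.HasAntidiagonal.mem_antidiagonal.mp hx
    have h1 : MvPolynomial.coeff x.1 (∑ i : Fin N, (X i : MvPolynomial (Fin N) ℤ) ^ (m * a)) ≠ 0 :=
      left_ne_zero_of_mul hne
    have h2 := ih x.2 (right_ne_zero_of_mul hne)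
    rw [MvPolynomial.coeff_sum] at h1
    obtain ⟨i0, -, hi0⟩ := Finset.exists_ne_zero_of_sum_ne_zero h1
    rw [MvPolynomial.coeff_X_pow] at hi0
    have hx1 : Finsupp.single i0 (m * a) = x.1 := by
      by_contra h; rw [if_neg h] at hi0; exact hi0 rfl
    intro i
    have hei : e i = x.1 i + x.2 i := by rw [← hadd]; rfl
    rw [hei, ← hx1]
    rcases eq_or_ne i i0 with h | h
    · subst h; rw [Finsupp.single_eq_same]; exact dvd_add (Dvd.intro a rfl) (h2 i)
    · rw [Finsupp.single_eq_of_ne h]; simpa using h2 i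
/-- the function `i ↦ θ_i - (i+1)` -/
def gI (s : Multiset ℕ) (i : ℕ) : ℤ := (sortedPart s i : ℤ) - ((i : ℤ) + 1)

lemma mem_partSetM {s : Multiset ℕ} {k : ℤ} : k ∈ partSetM s ↔ ∃ i : ℕ, gI s i = k :=
  Iff.rfl

lemma sortedPart_zero {s : Multiset ℕ} {i : ℕ} (h : Multiset.card s ≤ i) :
    sortedPart s i = 0 := by
  unfold sortedPart
  apply List.getD_eq_default
  simpa using h

lemma sortedPart_anti (s : Multiset ℕ) (i : ℕ) : sortedPart s (i + 1) ≤ sortedPart s i := by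
  set l := (s.sort (· ≤ ·)).reverse with hl
  by_cases h : i + 1 < l.length
  · have hi : i < l.length := by omega
    have hsorted : l.Pairwise (fun a b => b ≤ a) := by
      rw [hl]
      rw [List.pairwise_reverse]
      exact Multiset.pairwise_sort s _
    have := hsorted.rel_get_of_lt (a := ⟨i, hi⟩) (b := ⟨i+1, h⟩) (by simp)
    unfold sortedPart
    rw [← hl, List.getD_eq_getElem l 0 h, List.getD_eq_getElem l 0 hi]
    simpa [List.get_eq_getElem] using this
  · have : sortedPart s (i+1) = 0 := by
      unfold sortedPart; apply List.getD_eq_default; rw [← hl]; omega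
    omega

lemma gI_strictAnti (s : Multiset ℕ) : StrictAnti (gI s) := by
  apply strictAnti_nat_of_succ_lt
  intro i
  have h := sortedPart_anti s i
  have h' : (sortedPart s (i+1) : ℤ) ≤ (sortedPart s i : ℤ) := by exact_mod_cast h
  unfold gI
  push_cast
  omega

lemma msplit_of_counts (m n : ℕ) (hm : 0 < m) (hn : 0 < n) (θ : Multiset ℕ)
    (hθ : θ.sum = m * n) (hθ0 : 0 ∉ θ)
    (H : ∀ r : ZMod m, ((Finset.univ : Finset (Fin (m * n))).filter
      (fun i : Fin (m * n) => ((gI θ (i : ℕ) : ℤ) : ZMod m) = r)).card = n) :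
    MSplittable m θ := by
  set N := m * n with hN
  have hN0 : 0 < N := Nat.mul_pos hm hn
  -- card bound
  have hcard : Multiset.card θ ≤ N := by
    have h1 : Multiset.card θ • 1 ≤ θ.sum :=
      Multiset.card_nsmul_le_sum (fun x hx => Nat.one_le_iff_ne_zero.mpr (fun h => hθ0 (h ▸ hx)))
    simpa [hθ] using h1
  have hg_inj : Function.Injective (gI θ) := (gI_strictAnti θ).injective
  have hgN : ∀ i : ℕ, N ≤ i → gI θ i = -((i : ℤ) + 1) := by
    intro i hi
    unfold gI
    rw [sortedPart_zero (le_trans hcard hi)]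
    push_cast; ring
  have hglt : ∀ i : ℕ, N ≤ i → gI θ i < -(N : ℤ) := by
    intro i hi
    rw [hgN i hi]
    have : (N : ℤ) ≤ (i : ℤ) := by exact_mod_cast hi
    omega
  have hgge : ∀ i : ℕ, i < N → -(N : ℤ) ≤ gI θ i := by
    intro i hi
    have h1 : (i : ℤ) + 1 ≤ (N : ℤ) := by exact_mod_cast hi
    have h2 : (0 : ℤ) ≤ (sortedPart θ i : ℤ) := Int.natCast_nonneg _
    unfold gI; omega
  have hlow : ∀ k : ℤ, k < -(N : ℤ) → k ∈ partSetM θ := by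
    intro k hk
    refine mem_partSetM.mpr ⟨(-k - 1).toNat, ?_⟩
    have hk1 : (0 : ℤ) ≤ -k - 1 := by omega
    have hcast : (((-k - 1).toNat : ℕ) : ℤ) = -k - 1 := Int.toNat_of_nonneg hk1
    have hge : N ≤ (-k - 1).toNat := by
      have : (N : ℤ) ≤ -k - 1 := by omega
      omega
    rw [hgN _ hge, hcast]
    ring
  intro r hr
  set T := {a : ℤ | (m : ℤ) * a + (r : ℤ) ∈ partSetM θ} with hT
  set φ : ℤ → ℤ := fun a => (m : ℤ) * a + (r : ℤ) with hφ
  have hφinj : Function.Injective φ := by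
    intro a b hab
    have hm' : (m : ℤ) ≠ 0 := by exact_mod_cast hm.ne'
    have : (m : ℤ) * a = (m : ℤ) * b := by simpa [hφ] using hab
    exact mul_left_cancel₀ hm' this
  have hmZ : (0 : ℤ) < (m : ℤ) := by exact_mod_cast hm
  have hrZ : (0 : ℤ) ≤ (r : ℤ) := Int.natCast_nonneg _
  have hrm : (r : ℤ) < (m : ℤ) := by exact_mod_cast hr
  -- residue characterization
  have hres : ∀ k : ℤ, ((k : ZMod m) = ((r : ℕ) : ZMod m)) ↔ ∃ a : ℤ, k = (m : ℤ) * a + r := by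
    intro k
    constructor
    · intro h
      have h0 : ((k - (r : ℤ) : ℤ) : ZMod m) = 0 := by
        push_cast
        rw [h]
        push_cast
        ring
      obtain ⟨a, ha⟩ := (ZMod.intCast_zmod_eq_zero_iff_dvd _ m).mp h0
      exact ⟨a, by omega⟩
    · rintro ⟨a, rfl⟩
      push_cast
      simp [ZMod.natCast_self]
  -- the three finsets
  classical
  set FR := (Finset.univ : Finset (Fin N)).filter
      (fun i : Fin N => ((gI θ (i : ℕ) : ℤ) : ZMod m) = ((r : ℕ) : ZMod m)) with hFR
  have hFRcard : FR.card = n := H ((r : ℕ) : ZMod m)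
  set FA := FR.filter (fun i : Fin N => 0 ≤ gI θ (i : ℕ)) with hFA
  set FB := FR.filter (fun i : Fin N => ¬ (0 ≤ gI θ (i : ℕ))) with hFB
  have hsplit : FA.card + FB.card = n := by
    rw [hFA, hFB, Finset.card_filter_add_card_filter_not, hFRcard]
  -- sets A and B
  set A := T ∩ {k : ℤ | 0 ≤ k} with hA
  set B := {k : ℤ | k < 0} \ T with hB
  have hgiT : ∀ i : ℕ, ((gI θ i : ℤ) : ZMod m) = ((r : ℕ) : ZMod m) →
      ∃ a : ℤ, gI θ i = φ a ∧ a ∈ T := by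
    intro i hires
    obtain ⟨a, ha⟩ := (hres _).mp hires
    refine ⟨a, ha, ?_⟩
    have hφa : φ a = gI θ i := ha.symm
    show φ a ∈ partSetM θ
    rw [hφa]
    exact mem_partSetM.mpr ⟨i, rfl⟩
  have hNZ : ((N : ℕ) : ℤ) = (m : ℤ) * (n : ℤ) := by rw [hN]; push_cast; ring
  -- E1
  have E1 : φ '' A = (fun i : Fin N => gI θ (i : ℕ)) '' ↑FA := by
    ext k
    constructor
    · rintro ⟨a, ⟨haT, ha0⟩, rfl⟩
      have ha0' : (0 : ℤ) ≤ a := ha0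
      obtain ⟨i, hi⟩ := mem_partSetM.mp haT
      have hma : 0 ≤ (m : ℤ) * a := mul_nonneg (le_of_lt hmZ) ha0'
      have hφa0 : 0 ≤ (m : ℤ) * a + (r : ℤ) := by omega
      have hiN : i < N := by
        by_contra hc
        push_neg at hc
        have h1 := hglt i hc
        rw [hi] at h1
        omega
      refine ⟨⟨i, hiN⟩, ?_, hi⟩
      simp only [hFA, hFR, Finset.mem_coe, Finset.mem_filter, Finset.mem_univ, true_and]
      constructor
      · show ((gI θ i : ℤ) : ZMod m) = ((r : ℕ) : ZMod m)
        rw [hi]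
        exact (hres _).mpr ⟨a, rfl⟩
      · show 0 ≤ gI θ i
        rw [hi]; exact hφa0
    · rintro ⟨i, hiFA, rfl⟩
      simp only [hFA, hFR, Finset.mem_coe, Finset.mem_filter, Finset.mem_univ, true_and]
        at hiFA
      obtain ⟨hires, hipos⟩ := hiFA
      obtain ⟨a, ha, haT⟩ := hgiT _ hires
      have ha0 : 0 ≤ a := by
        by_contra hc
        push_neg at hc
        have hle : a ≤ -1 := by omega
        have h2 : (m : ℤ) * a ≤ (m : ℤ) * (-1) :=
          mul_le_mul_of_nonneg_left hle (le_of_lt hmZ)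
        have h3 : (m : ℤ) * (-1) = -(m : ℤ) := by ring
        rw [ha] at hipos
        have hipos' : 0 ≤ (m : ℤ) * a + (r : ℤ) := hipos
        omega
      exact ⟨a, ⟨haT, ha0⟩, ha.symm⟩
  -- E2
  have E2 : φ '' (Set.Ico (-(n : ℤ)) 0 ∩ T) = (fun i : Fin N => gI θ (i : ℕ)) '' ↑FB := by
    ext k
    constructor
    · rintro ⟨a, ⟨hIco, haT⟩, rfl⟩
      obtain ⟨han, ha0⟩ := hIco
      obtain ⟨i, hi⟩ := mem_partSetM.mp haT
      have h1 : (m : ℤ) * (-(n : ℤ)) ≤ (m : ℤ) * a :=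
        mul_le_mul_of_nonneg_left han (le_of_lt hmZ)
      have h1' : (m : ℤ) * (-(n : ℤ)) = -((m : ℤ) * (n : ℤ)) := by ring
      have hle : a ≤ -1 := by omega
      have h2 : (m : ℤ) * a ≤ (m : ℤ) * (-1) :=
        mul_le_mul_of_nonneg_left hle (le_of_lt hmZ)
      have h2' : (m : ℤ) * (-1) = -(m : ℤ) := by ring
      have hiN : i < N := by
        by_contra hc
        push_neg at hc
        have h3 := hglt i hc
        rw [hi] at h3
        omega
      refine ⟨⟨i, hiN⟩, ?_, hi⟩
      simp only [hFB, hFR, Finset.mem_coe, Finset.mem_filter, Finset.mem_univ, true_and]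
      constructor
      · show ((gI θ i : ℤ) : ZMod m) = ((r : ℕ) : ZMod m)
        rw [hi]
        exact (hres _).mpr ⟨a, rfl⟩
      · show ¬ (0 ≤ gI θ i)
        rw [hi]; omega
    · rintro ⟨i, hiFB, rfl⟩
      simp only [hFB, hFR, Finset.mem_coe, Finset.mem_filter, Finset.mem_univ, true_and]
        at hiFB
      obtain ⟨hires, hineg⟩ := hiFB
      push_neg at hineg
      obtain ⟨a, ha, haT⟩ := hgiT _ hires
      rw [ha] at hineg
      have hineg' : (m : ℤ) * a + (r : ℤ) < 0 := hineg
      have haneg : a < 0 := by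
        by_contra hc
        push_neg at hc
        have h1 : 0 ≤ (m : ℤ) * a := mul_nonneg (le_of_lt hmZ) hc
        omega
      have hage : -(n : ℤ) ≤ a := by
        have hge := hgge (i : ℕ) i.2
        rw [ha] at hge
        have hge' : -((N : ℕ) : ℤ) ≤ (m : ℤ) * a + (r : ℤ) := hge
        by_contra hc
        push_neg at hc
        have hle : a ≤ -(n : ℤ) - 1 := by omega
        have h2 : (m : ℤ) * a ≤ (m : ℤ) * (-(n : ℤ) - 1) :=
          mul_le_mul_of_nonneg_left hle (le_of_lt hmZ)
        have h2' : (m : ℤ) * (-(n : ℤ) - 1) = -((m : ℤ) * (n : ℤ)) - (m : ℤ) := by ring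
        omega
      exact ⟨a, ⟨⟨hage, haneg⟩, haT⟩, ha.symm⟩
  -- injectivity of gI ∘ val
  have hgv_inj : Function.Injective (fun i : Fin N => gI θ (i : ℕ)) :=
    fun i j hij => Fin.ext (hg_inj hij)
  -- ncard of A
  have hAim : (φ '' A).Finite := by
    rw [E1]
    exact (FA.finite_toSet).image _
  have hAfin : A.Finite :=
    Set.Finite.of_finite_image hAim (Function.Injective.injOn hφinj)
  have hAcard : A.ncard = FA.card := by
    have h1 : (φ '' A).ncard = A.ncard := Set.ncard_image_of_injective A hφinj
    have h2 : ((fun i : Fin N => gI θ (i : ℕ)) '' ↑FA).ncard = (↑FA : Set (Fin N)).ncard :=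
      Set.ncard_image_of_injective _ hgv_inj
    rw [← h1, E1, h2, Set.ncard_coe_finset]
  -- B = Ico \ (Ico ∩ T)
  have hBsub : B = Set.Ico (-(n : ℤ)) 0 \ (Set.Ico (-(n : ℤ)) 0 ∩ T) := by
    ext a
    simp only [hB, Set.mem_diff, Set.mem_setOf_eq, Set.mem_inter_iff, Set.mem_Ico]
    constructor
    · rintro ⟨ha0, haT⟩
      have han : -(n : ℤ) ≤ a := by
        by_contra hc
        push_neg at hc
        have hle : a ≤ -(n : ℤ) - 1 := by omega
        have h2 : (m : ℤ) * a ≤ (m : ℤ) * (-(n : ℤ) - 1) :=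
          mul_le_mul_of_nonneg_left hle (le_of_lt hmZ)
        have h2' : (m : ℤ) * (-(n : ℤ) - 1) = -((m : ℤ) * (n : ℤ)) - (m : ℤ) := by ring
        have hin : (m : ℤ) * a + (r : ℤ) < -((N : ℕ) : ℤ) := by omega
        exact haT (hlow _ hin)
      exact ⟨⟨han, ha0⟩, fun h => haT h.2⟩
    · rintro ⟨⟨han, ha0⟩, hnot⟩
      exact ⟨ha0, fun hT' => hnot ⟨⟨han, ha0⟩, hT'⟩⟩
  have hIcofin : (Set.Ico (-(n : ℤ)) 0).Finite := Set.finite_Ico _ _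
  have hBfin : B.Finite := by
    rw [hBsub]
    exact hIcofin.diff
  have hIcoCard : (Set.Ico (-(n : ℤ)) 0).ncard = n := by
    rw [← Finset.coe_Ico, Set.ncard_coe_finset, Int.card_Ico]
    omega
  have hIntCard : (Set.Ico (-(n : ℤ)) 0 ∩ T).ncard = FB.card := by
    have h1 : (φ '' (Set.Ico (-(n : ℤ)) 0 ∩ T)).ncard = (Set.Ico (-(n : ℤ)) 0 ∩ T).ncard :=
      Set.ncard_image_of_injective _ hφinj
    have h2 : ((fun i : Fin N => gI θ (i : ℕ)) '' ↑FB).ncard = (↑FB : Set (Fin N)).ncard :=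
      Set.ncard_image_of_injective _ hgv_inj
    rw [← h1, E2, h2, Set.ncard_coe_finset]
  have hBcard : B.ncard = n - FB.card := by
    rw [hBsub, Set.ncard_diff Set.inter_subset_left (hIcofin.inter_of_left _), hIcoCard,
      hIntCard]
  refine ⟨hAfin, hBfin, ?_⟩
  show A.ncard = B.ncard
  rw [hAcard, hBcard]
  omega

/-- If `θ ⊢ mn` is not `m`-splittable (it has nonempty `m`-core), then the
irreducible character of `S_{mn}` indexed by `θ` vanishes on the conjugacy
class of cycle type `mλ`, for any `λ ⊢ n`. -/
theorem char_eq_zero_of_not_msplittable (m n : ℕ) (hm : 0 < m) (hn : 0 < n)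
    (lam θ : Multiset ℕ) (hlam : lam.sum = n) (hlam0 : 0 ∉ lam)
    (hθ : θ.sum = m * n) (hθ0 : 0 ∉ θ) (hns : ¬ MSplittable m θ) :
    chiChar (m * n) θ (lam.map (fun k => m * k)) = 0 := by
  by_contra hchi
  apply hns
  unfold chiChar at hchi
  rw [Multiset.map_map] at hchi
  rw [MvPolynomial.coeff_mul] at hchi
  obtain ⟨x, hx, hne2⟩ := Finset.exists_ne_zero_of_sum_ne_zero hchi
  have hadd : x.1 + x.2 = Finsupp.equivFunOnFinite.symm
      (fun i : Fin (m * n) => sortedPart θ i + (m * n - 1 - (i : ℕ))) :=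
    Finset.HasAntidiagonal.mem_antidiagonal.mp hx
  have hd := left_ne_zero_of_mul hne2
  have he := right_ne_zero_of_mul hne2
  obtain ⟨σ, hσ⟩ := vand_support x.1 hd
  have hdvd : ∀ i, m ∣ x.2 i := by
    apply psum_support m lam x.2
    simpa [Function.comp] using he
  -- residues of gI θ agree with residues of σ
  have hres : ∀ i : Fin (m * n),
      ((gI θ (i : ℕ) : ℤ) : ZMod m) = (((σ i : Fin (m * n)) : ℕ) : ZMod m) := by
    intro i
    have hβ : (Finsupp.equivFunOnFinite.symm
        (fun i : Fin (m * n) => sortedPart θ i + (m * n - 1 - (i : ℕ)))) i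
        = sortedPart θ (i : ℕ) + (m * n - 1 - (i : ℕ)) := rfl
    have hsum : x.1 i + x.2 i = sortedPart θ (i : ℕ) + (m * n - 1 - (i : ℕ)) := by
      rw [← hβ, ← hadd]; rfl
    have h1 : ((sortedPart θ (i : ℕ) + (m * n - 1 - (i : ℕ)) : ℕ) : ℤ)
        = gI θ (i : ℕ) + ((m * n : ℕ) : ℤ) := by
      have hiN : (i : ℕ) < m * n := i.2
      unfold gI
      omega
    have h2 : ((sortedPart θ (i : ℕ) + (m * n - 1 - (i : ℕ)) : ℕ) : ZMod m)
        = ((gI θ (i : ℕ) : ℤ) : ZMod m) := by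
      have : (((sortedPart θ (i : ℕ) + (m * n - 1 - (i : ℕ)) : ℕ) : ℤ) : ZMod m)
          = ((gI θ (i : ℕ) + ((m * n : ℕ) : ℤ) : ℤ) : ZMod m) := by rw [h1]
      push_cast at this ⊢
      rw [this]
      have hmn0 : ((m * n : ℕ) : ZMod m) = 0 := by
        rw [Nat.cast_mul, ZMod.natCast_self, zero_mul]
      push_cast at hmn0
      rw [hmn0, add_zero]
    have h3 : ((sortedPart θ (i : ℕ) + (m * n - 1 - (i : ℕ)) : ℕ) : ZMod m)
        = (((σ i : Fin (m * n)) : ℕ) : ZMod m) := by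
      rw [← hsum]
      push_cast
      rw [hσ i]
      have he0 : ((x.2 i : ℕ) : ZMod m) = 0 :=
        (ZMod.natCast_eq_zero_iff _ m).mpr (hdvd i)
      rw [he0, add_zero]
    rw [h2.symm, h3]
  -- counts
  apply msplit_of_counts m n hm hn θ hθ hθ0
  intro r
  have hfiltereq : (Finset.univ : Finset (Fin (m * n))).filter
        (fun i : Fin (m * n) => ((gI θ (i : ℕ) : ℤ) : ZMod m) = r)
      = (Finset.univ : Finset (Fin (m * n))).filter
        (fun i : Fin (m * n) => (((σ i : Fin (m * n)) : ℕ) : ZMod m) = r) := by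
    apply Finset.filter_congr
    intro i _
    rw [hres i]
  rw [hfiltereq]
  have hbij : ((Finset.univ : Finset (Fin (m * n))).filter
        (fun i : Fin (m * n) => (((σ i : Fin (m * n)) : ℕ) : ZMod m) = r)).card
      = ((Finset.univ : Finset (Fin (m * n))).filter
        (fun j : Fin (m * n) => ((j : ℕ) : ZMod m) = r)).card := by
    apply Finset.card_bij (fun i _ => σ i)
    · intro a ha
      simp only [Finset.mem_filter, Finset.mem_univ, true_and] at ha ⊢
      exact ha
    · intro a _ b _ hab
      exact σ.injective hab
    · intro b hb
      simp only [Finset.mem_filter, Finset.mem_univ, true_and] at hb ⊢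
      exact ⟨σ⁻¹ b, by simpa using hb, by simp⟩
  rw [hbij]
  exact count_residues m n hm r
end

section
/- For m ≥ 2 and natural numbers k_1,...,k_{m-1}, define e^{(m),j}_{k_1,...,k_{m-1}} = ∏_{1 ≤ i ≤ m, i ≠ j} (i-j)^{k_{(i-j) mod m}}. Then for j ≤ m/2: |e^{(m),j+1}_{k_1,...,k_{m-1}}| ≤ |e^{(m),j}_{k_1,...,k_{m-1}}|, and if moreover k_{m-j} ≥ 1 then |e^{(m),j+1}_{k_1,...,k_{m-1}}| ≤ (j/(m-j)) |e^{(m),j}_{k_1,...,k_{m-1}}|. -/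
/-- The coefficient `e^{(m),j}_{k_1,…,k_{m-1}} = ∏_{1 ≤ i ≤ m, i ≠ j}
(i-j)^{k_{(i-j) mod m}}`, where `k : ℕ → ℕ` records `k_1, …, k_{m-1}`. -/
def ecoef (m j : ℕ) (k : ℕ → ℕ) : ℤ :=
  ∏ i ∈ (Finset.Icc 1 m).erase j,
    ((i : ℤ) - (j : ℤ)) ^ k ((((i : ℤ) - (j : ℤ)) % (m : ℤ)).toNat)

lemma ecoef_key (m j : ℕ) (hm : 2 ≤ m) (hj1 : 1 ≤ j) (hj : 2 * j ≤ m)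
    (k : ℕ → ℕ) :
    ((m : ℤ) - j) ^ (k (m - j)) * ecoef m (j + 1) k
      = (-(j : ℤ)) ^ (k (m - j)) * ecoef m j k := by
  have hjm : j < m := by omega
  set F : ℕ → ℤ := fun i => ((i:ℤ) - (j:ℤ)) ^ k ((((i:ℤ) - (j:ℤ)) % (m:ℤ)).toNat) with hF
  have h1 : ecoef m (j+1) k = ∏ i ∈ (Finset.Icc 0 (m-1)).erase j, F i := by
    unfold ecoef
    refine Finset.prod_nbij' (fun i => i - 1) (fun i => i + 1) ?_ ?_ ?_ ?_ ?_
    · intro a ha; simp only [Finset.mem_erase, Finset.mem_Icc] at ha ⊢; omega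
    · intro a ha; simp only [Finset.mem_erase, Finset.mem_Icc] at ha ⊢; omega
    · intro a ha; simp only [Finset.mem_erase, Finset.mem_Icc] at ha
      show a - 1 + 1 = a; omega
    · intro a ha; simp only [Finset.mem_erase, Finset.mem_Icc] at ha
      show a + 1 - 1 = a; omega
    · intro a ha; simp only [Finset.mem_erase, Finset.mem_Icc] at ha
      have hc : ((a - 1 : ℕ) : ℤ) = (a : ℤ) - 1 := by
        have : 1 ≤ a := ha.2.1
        push_cast [this]; ring
      simp only [hF, hc]
      have h2 : (a : ℤ) - ((j:ℕ)+1 : ℕ) = (a:ℤ) - 1 - j := by push_cast; ring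
      push_cast
      ring_nf
  have h2 : ecoef m j k = ∏ i ∈ (Finset.Icc 1 m).erase j, F i := rfl
  have hs1 : (Finset.Icc 0 (m-1)).erase j
      = insert 0 ((Finset.Icc 1 (m-1)).erase j) := by
    ext a; simp only [Finset.mem_erase, Finset.mem_Icc, Finset.mem_insert]; omega
  have hs2 : (Finset.Icc 1 m).erase j
      = insert m ((Finset.Icc 1 (m-1)).erase j) := by
    ext a; simp only [Finset.mem_erase, Finset.mem_Icc, Finset.mem_insert]; omega
  have h0 : (0:ℕ) ∉ (Finset.Icc 1 (m-1)).erase j := by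
    simp only [Finset.mem_erase, Finset.mem_Icc]; omega
  have hmm : m ∉ (Finset.Icc 1 (m-1)).erase j := by
    simp only [Finset.mem_erase, Finset.mem_Icc]; omega
  set P := ∏ i ∈ (Finset.Icc 1 (m-1)).erase j, F i with hP
  have hF0 : F 0 = (-(j:ℤ)) ^ (k (m - j)) := by
    simp only [hF]
    have e1 : (((0:ℕ):ℤ) - (j:ℤ)) = -(j:ℤ) := by push_cast; ring
    have e3 : (((0:ℕ):ℤ) - (j:ℤ)) % (m:ℤ) = ((m:ℤ) - j) % m := by
      conv_lhs => rw [show (((0:ℕ):ℤ) - (j:ℤ)) = ((m:ℤ) - j) + (m:ℤ) * (-1) by push_cast; ring]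
      rw [Int.add_mul_emod_self_left]
    have e4 : ((m:ℤ) - j) % m = (m:ℤ) - j :=
      Int.emod_eq_of_lt (by push_cast; omega) (by push_cast; omega)
    have e2 : ((((0:ℕ):ℤ) - (j:ℤ)) % (m:ℤ)).toNat = m - j := by
      rw [e3, e4]; omega
    rw [e2, e1]
  have hFm : F m = ((m:ℤ) - j) ^ (k (m - j)) := by
    simp only [hF]
    have e4 : ((m:ℤ) - j) % m = (m:ℤ) - j :=
      Int.emod_eq_of_lt (by push_cast; omega) (by push_cast; omega)
    have e2 : ((((m:ℕ):ℤ) - (j:ℤ)) % (m:ℤ)).toNat = m - j := by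
      rw [e4]; omega
    rw [e2]
  rw [h1, h2, hs1, hs2, Finset.prod_insert h0, Finset.prod_insert hmm, hF0, hFm]
  ring

/-- Telescoping bounds: for `1 ≤ j ≤ m/2`,
`|e^{(m),j+1}| ≤ |e^{(m),j}|`, and if moreover `k_{m-j} ≥ 1` then
`|e^{(m),j+1}| ≤ (j/(m-j)) |e^{(m),j}|`. -/
theorem ecoef_abs_le (m j : ℕ) (hm : 2 ≤ m) (hj1 : 1 ≤ j) (hj : 2 * j ≤ m)
    (k : ℕ → ℕ) :
    |ecoef m (j + 1) k| ≤ |ecoef m j k| ∧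
      (1 ≤ k (m - j) →
        (|ecoef m (j + 1) k| : ℚ) ≤
          ((j : ℚ) / ((m : ℚ) - (j : ℚ))) * (|ecoef m j k| : ℚ)) := by
  have hjm : j < m := by omega
  set K := k (m - j) with hK
  have key := ecoef_key m j hm hj1 hj k
  have habs : ((m:ℤ) - j) ^ K * |ecoef m (j+1) k| = (j:ℤ) ^ K * |ecoef m j k| := by
    have := congrArg abs key
    rwa [abs_mul, abs_mul, abs_pow, abs_pow, abs_neg,
      abs_of_nonneg (by push_cast; omega : (0:ℤ) ≤ (m:ℤ) - j),
      abs_of_nonneg (by positivity : (0:ℤ) ≤ (j:ℤ))] at this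
  have hd : (0:ℤ) < (m:ℤ) - j := by push_cast; omega
  have hjle : (j:ℤ) ≤ (m:ℤ) - j := by push_cast; omega
  have hpowle : (j:ℤ) ^ K ≤ ((m:ℤ) - j) ^ K :=
    pow_le_pow_left₀ (by positivity) hjle K
  constructor
  · have hpos : (0:ℤ) < ((m:ℤ) - j) ^ K := pow_pos hd K
    have h := habs.le.trans (mul_le_mul_of_nonneg_right hpowle (abs_nonneg _))
    exact le_of_mul_le_mul_left h hpos
  · intro hk1
    obtain ⟨K', hKe⟩ : ∃ K', K = K' + 1 := ⟨K - 1, by omega⟩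
    have hdq : (0:ℚ) < (m:ℚ) - j := by exact_mod_cast hd
    have habsq : ((m:ℚ) - j) ^ K * (|ecoef m (j+1) k| : ℚ)
        = (j:ℚ) ^ K * (|ecoef m j k| : ℚ) := by exact_mod_cast habs
    rw [hKe, pow_succ, pow_succ] at habsq
    rw [div_mul_eq_mul_div, le_div_iff₀ hdq]
    have hstep : (j:ℚ) ^ K' ≤ ((m:ℚ) - j) ^ K' :=
      pow_le_pow_left₀ (by positivity) (by exact_mod_cast hjle) _
    have hposq : (0:ℚ) < ((m:ℚ) - j) ^ K' := pow_pos hdq _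
    refine le_of_mul_le_mul_right ?_ hposq
    calc (|ecoef m (j+1) k| : ℚ) * ((m:ℚ) - j) * ((m:ℚ) - j) ^ K'
        = ((m:ℚ) - j) ^ K' * ((m:ℚ) - j) * (|ecoef m (j+1) k| : ℚ) := by ring
      _ = (j:ℚ) ^ K' * (j:ℚ) * (|ecoef m j k| : ℚ) := habsq
      _ = ((j:ℚ) * (|ecoef m j k| : ℚ)) * (j:ℚ) ^ K' := by ring
      _ ≤ ((j:ℚ) * (|ecoef m j k| : ℚ)) * ((m:ℚ) - j) ^ K' := by
          apply mul_le_mul_of_nonneg_left hstep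
          positivity
end

section
/- For m = 2p even, define d^{(m)}_{k_1,...,k_{m-1}} = 2 Σ_{j=1}^{p} e^{(m),j}_{k_1,...,k_{m-1}}; for m = 2p+1 odd, define d^{(m)}_{k_1,...,k_{m-1}} = e^{(m),p+1}_{k_1,...,k_{m-1}} + 2 Σ_{j=1}^{p} e^{(m),j}_{k_1,...,k_{m-1}}, where e^{(m),j}_{k_1,...,k_{m-1}} = ∏_{1 ≤ i ≤ m, i ≠ j}(i-j)^{k_{(i-j) mod m}}. Then for all m ≥ 2 and all nonnegative integers k_1,...,k_{m-1}, d^{(m)}_{k_1,...,k_{m-1}} is a positive integer divisible by m. -/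
/-- `d^{(m)} = 2 Σ_{j=1}^{p} e^{(m),j}` for `m = 2p` even, and
`d^{(m)} = e^{(m),p+1} + 2 Σ_{j=1}^{p} e^{(m),j}` for `m = 2p+1` odd. -/
def dcoef (m : ℕ) (k : ℕ → ℕ) : ℤ :=
  if m % 2 = 0 then 2 * ∑ j ∈ Finset.Icc 1 (m / 2), ecoef m j k
  else ecoef m (m / 2 + 1) k + 2 * ∑ j ∈ Finset.Icc 1 (m / 2), ecoef m j k

open Finset

lemma toNat_emod (m i j : ℕ) (hj1 : 1 ≤ j) (hjm : j ≤ m) (hi1 : 1 ≤ i) (him : i ≤ m)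
    (hij : i ≠ j) :
    (((i : ℤ) - (j : ℤ)) % (m : ℤ)).toNat = if j < i then i - j else i + m - j := by
  rcases lt_or_gt_of_ne hij with h | h
  · -- i < j
    rw [if_neg (by omega)]
    have e1 : ((i : ℤ) - j) % m = ((i : ℤ) - j + m * 1) % m := by
      rw [Int.add_mul_emod_self_left]
    rw [e1, Int.emod_eq_of_lt (by push_cast; omega) (by push_cast; omega)]
    omega
  · rw [if_pos h, Int.emod_eq_of_lt (by push_cast; omega) (by push_cast; omega)]
    omega

lemma ecoef_shift (m j : ℕ) (hj1 : 1 ≤ j) (hjm : j + 1 ≤ m) (k : ℕ → ℕ) :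
    ecoef m (j+1) k * ((m : ℤ) - j) ^ k (m - j) =
    ecoef m j k * (-(j : ℤ)) ^ k (m - j) := by
  have key1 : ecoef m (j+1) k =
      ∏ i ∈ (Icc 0 (m-1)).erase j,
        ((i : ℤ) - j) ^ k ((((i : ℤ) - j) % (m : ℤ)).toNat) := by
    unfold ecoef
    refine Finset.prod_nbij' (fun i => i - 1) (fun i => i + 1) ?_ ?_ ?_ ?_ ?_
    · intro a ha; simp only [mem_erase, mem_Icc] at *; omega
    · intro a ha; simp only [mem_erase, mem_Icc] at *; omega
    · intro a ha; simp only [mem_erase, mem_Icc] at ha; omega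
    · intro a ha; simp only [mem_erase, mem_Icc] at ha; omega
    · intro a ha
      simp only [mem_erase, mem_Icc] at ha
      have : ((a - 1 : ℕ) : ℤ) = (a : ℤ) - 1 := by omega
      rw [this]
      push_cast
      ring_nf
  have h0 : (Icc 0 (m-1)).erase j = insert 0 ((Icc 1 (m-1)).erase j) := by
    ext x; simp only [mem_erase, mem_Icc, mem_insert]; omega
  have hmem0 : (0:ℕ) ∉ (Icc 1 (m-1)).erase j := by
    simp only [mem_erase, mem_Icc]; omega
  have hM : (Icc 1 m).erase j = insert m ((Icc 1 (m-1)).erase j) := by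
    ext x; simp only [mem_erase, mem_Icc, mem_insert]; omega
  have hmemM : m ∉ (Icc 1 (m-1)).erase j := by
    simp only [mem_erase, mem_Icc]; omega
  -- value at 0
  have v0 : ((-(j : ℤ)) % (m : ℤ)).toNat = m - j := by
    have e1 : (-(j : ℤ)) % m = (-(j : ℤ) + m * 1) % m := by
      rw [Int.add_mul_emod_self_left]
    rw [e1, Int.emod_eq_of_lt (by omega) (by omega)]
    omega
  have vM : (((m : ℤ) - j) % (m : ℤ)).toNat = m - j := by
    rw [Int.emod_eq_of_lt (by omega) (by omega)]; omega
  have eJ : ecoef m j k =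
      (∏ i ∈ (Icc 1 (m-1)).erase j, ((i : ℤ) - j) ^ k ((((i : ℤ) - j) % (m : ℤ)).toNat))
        * ((m : ℤ) - j) ^ k (m - j) := by
    unfold ecoef
    rw [hM, Finset.prod_insert hmemM, vM]; ring
  have eJ1 : ecoef m (j+1) k =
      (∏ i ∈ (Icc 1 (m-1)).erase j, ((i : ℤ) - j) ^ k ((((i : ℤ) - j) % (m : ℤ)).toNat))
        * (-(j : ℤ)) ^ k (m - j) := by
    rw [key1, h0, Finset.prod_insert hmem0]
    simp only [Nat.cast_zero, zero_sub, v0]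
    ring
  rw [eJ, eJ1]; ring

lemma ecoef_ne_zero (m j : ℕ) (k : ℕ → ℕ) : ecoef m j k ≠ 0 := by
  unfold ecoef
  apply Finset.prod_ne_zero_iff.2
  intro i hi
  simp only [mem_erase, mem_Icc] at hi
  exact pow_ne_zero _ (by omega)

lemma one_le_ecoef_one (m : ℕ) (k : ℕ → ℕ) : 1 ≤ ecoef m 1 k := by
  unfold ecoef
  have : (0:ℤ) < ∏ i ∈ (Finset.Icc 1 m).erase 1,
      ((i : ℤ) - (1 : ℕ)) ^ k ((((i : ℤ) - (1 : ℕ)) % (m : ℤ)).toNat) :=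
    Finset.prod_pos (fun i hi => by
      simp only [mem_erase, mem_Icc] at hi
      exact pow_pos (by push_cast; omega) _)
  omega

lemma abs_ecoef_shift (m j : ℕ) (hj1 : 1 ≤ j) (hjm : j + 1 ≤ m) (k : ℕ → ℕ)
    (hshift : ecoef m (j+1) k * ((m : ℤ) - j) ^ k (m - j) =
      ecoef m j k * (-(j : ℤ)) ^ k (m - j)) :
    |ecoef m (j+1) k| * ((m : ℤ) - j) ^ k (m - j) = |ecoef m j k| * (j : ℤ) ^ k (m - j) := by
  have := congrArg abs hshift
  rw [abs_mul, abs_mul, abs_pow, abs_pow] at this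
  rw [abs_of_nonneg (by omega : (0:ℤ) ≤ (m : ℤ) - j), abs_neg, abs_of_nonneg (by positivity : (0:ℤ) ≤ (j:ℤ))] at this
  exact this


lemma abs_ecoef_succ_le (m j : ℕ) (hj1 : 1 ≤ j) (h2j : 2 * j ≤ m) (k : ℕ → ℕ) :
    |ecoef m (j+1) k| ≤ |ecoef m j k| := by
  have hjm : j + 1 ≤ m := by omega
  have h := abs_ecoef_shift m j hj1 hjm k (ecoef_shift m j hj1 hjm k)
  have hp : (0:ℤ) < ((m : ℤ) - j) ^ k (m - j) := pow_pos (by push_cast; omega) _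
  have hle : (j : ℤ) ^ k (m - j) ≤ ((m : ℤ) - j) ^ k (m - j) :=
    pow_le_pow_left₀ (by positivity) (by push_cast; omega) _
  nlinarith [abs_nonneg (ecoef m j k), abs_nonneg (ecoef m (j+1) k)]

lemma abs_ecoef_shrink (m j : ℕ) (hj1 : 1 ≤ j) (h2j : 2 * j ≤ m) (k : ℕ → ℕ)
    (hk : k (m - j) ≠ 0) :
    ((m : ℤ) - j) * |ecoef m (j+1) k| ≤ (j : ℤ) * |ecoef m j k| := by
  have hjm : j + 1 ≤ m := by omega
  have h := abs_ecoef_shift m j hj1 hjm k (ecoef_shift m j hj1 hjm k)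
  obtain ⟨κ', hκ'⟩ : ∃ κ', k (m - j) = κ' + 1 := ⟨k (m - j) - 1, by omega⟩
  rw [hκ'] at h
  have key : (j : ℤ) ^ (κ' + 1) ≤ (j : ℤ) * ((m : ℤ) - j) ^ κ' := by
    rw [pow_succ']
    apply mul_le_mul_of_nonneg_left _ (by positivity)
    exact pow_le_pow_left₀ (by positivity) (by push_cast; omega) _
  have hp : (0:ℤ) < ((m : ℤ) - j) ^ κ' := pow_pos (by push_cast; omega) _
  -- |e^{j+1}| * (m-j)^{κ'+1} = |e^j| * j^{κ'+1} ≤ |e^j| * j * (m-j)^{κ'}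
  have h2 : |ecoef m (j+1) k| * ((m:ℤ) - j) ^ (κ' + 1) ≤ |ecoef m j k| * ((j:ℤ) * ((m:ℤ)-j)^κ') := by
    rw [h]
    exact mul_le_mul_of_nonneg_left key (abs_nonneg _)
  rw [pow_succ] at h2
  nlinarith [abs_nonneg (ecoef m (j+1) k)]

lemma ecoef_succ_eq (m j : ℕ) (hj1 : 1 ≤ j) (hjm : j + 1 ≤ m) (k : ℕ → ℕ)
    (hk : k (m - j) = 0) : ecoef m (j+1) k = ecoef m j k := by
  have h := ecoef_shift m j hj1 hjm k
  rw [hk, pow_zero, pow_zero, mul_one, mul_one] at h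
  exact h

lemma ecoef_eq_ecoef_one (m : ℕ) (k : ℕ → ℕ) (j : ℕ) (hj1 : 1 ≤ j) (hjm : j ≤ m)
    (h : ∀ j', 1 ≤ j' → j' < j → k (m - j') = 0) : ecoef m j k = ecoef m 1 k := by
  induction j with
  | zero => omega
  | succ n ih =>
    rcases Nat.eq_or_lt_of_le hj1 with h1 | h1
    · rw [← h1]
    · have hn1 : 1 ≤ n := by omega
      rw [ecoef_succ_eq m n hn1 hjm k (h n hn1 (by omega))]
      exact ih hn1 (by omega) (fun j' a b => h j' a (by omega))

lemma ecoef_chain (m j₀ : ℕ) (k : ℕ → ℕ) (hj1 : 1 ≤ j₀) (hk : k (m - j₀) ≠ 0) :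
    ∀ j, j₀ < j → 2 * (j - 1) ≤ m →
      ((m : ℤ) - j₀) * |ecoef m j k| ≤ (j₀ : ℤ) * |ecoef m j₀ k| := by
  intro j
  induction j with
  | zero => omega
  | succ n ih =>
    intro hlt hb
    rcases Nat.eq_or_lt_of_le hlt with h1 | h1
    · have : n = j₀ := by omega
      subst this
      exact abs_ecoef_shrink m n hj1 (by omega) k hk
    · have h2n : 2 * n ≤ m := by omega
      have step : |ecoef m (n+1) k| ≤ |ecoef m n k| :=
        abs_ecoef_succ_le m n (by omega) h2n k
      have := ih (by omega) (by omega)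
      nlinarith [abs_nonneg (ecoef m (n+1) k)]

lemma toNat_emod_cast (m : ℕ) (hm : 0 < m) (a : ℤ) :
    (((a % (m : ℤ)).toNat : ℕ) : ZMod m) = (a : ZMod m) := by
  have h2 : (((a % (m : ℤ)).toNat : ℕ) : ℤ) = a % (m : ℤ) :=
    Int.toNat_of_nonneg (Int.emod_nonneg _ (by exact_mod_cast hm.ne'))
  have h3 : ((((a % (m : ℤ)).toNat : ℕ) : ℤ) : ZMod m) = (((a % (m : ℤ)).toNat : ℕ) : ZMod m) :=
    Int.cast_natCast _
  rw [← h3, h2, Int.emod_def, sub_eq_add_neg]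
  push_cast
  simp [ZMod.natCast_self]

lemma ecoef_cast (m : ℕ) (j : ℕ) (hj1 : 1 ≤ j) (hjm : j ≤ m) (k : ℕ → ℕ) :
    ((ecoef m j k : ℤ) : ZMod m) = ∏ r ∈ Icc 1 (m-1), (r : ZMod m) ^ (k r) := by
  unfold ecoef
  push_cast
  refine Finset.prod_nbij' (fun i => (((i : ℤ) - (j : ℤ)) % (m : ℤ)).toNat)
    (fun r => if j + r ≤ m then j + r else j + r - m) ?_ ?_ ?_ ?_ ?_
  · intro a ha
    simp only [mem_erase, mem_Icc] at ha
    rw [toNat_emod m a j hj1 hjm (by omega) (by omega) (by omega)]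
    simp only [mem_Icc]
    split <;> omega
  · intro r hr
    simp only [mem_erase, mem_Icc] at hr ⊢
    split <;> omega
  · intro a ha
    simp only [mem_erase, mem_Icc] at ha
    rw [toNat_emod m a j hj1 hjm (by omega) (by omega) (by omega)]
    split <;> split <;> omega
  · intro r hr
    simp only [mem_Icc] at hr
    by_cases h : j + r ≤ m
    · rw [if_pos h, toNat_emod m (j+r) j hj1 hjm (by omega) (by omega) (by omega)]
      split <;> omega
    · rw [if_neg h, toNat_emod m (j+r-m) j hj1 hjm (by omega) (by omega) (by omega)]
      split <;> omega
  · intro a ha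
    simp only [mem_erase, mem_Icc] at ha
    have h1 : (((((a : ℤ) - (j : ℤ)) % (m : ℤ)).toNat : ℕ) : ZMod m)
        = ((a : ZMod m) - (j : ZMod m)) := by
      rw [toNat_emod_cast m (by omega) ((a : ℤ) - (j : ℤ))]
      push_cast
      ring
    rw [h1]

lemma key_sum (m : ℕ) (k : ℕ → ℕ) (j₀ q : ℕ) (hj₀1 : 1 ≤ j₀) (hj₀q : j₀ ≤ q) (h2q : 2*q ≤ m)
    (heq : ∀ j, 1 ≤ j → j ≤ j₀ → ecoef m j k = ecoef m 1 k)
    (hk : k (m - j₀) ≠ 0) :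
    ((m:ℤ) - q) * ((j₀ : ℤ) * ecoef m 1 k) ≤ ((m:ℤ) - j₀) * ∑ j ∈ Icc 1 q, ecoef m j k := by
  set e1 := ecoef m 1 k with he1
  have he1pos : 1 ≤ e1 := one_le_ecoef_one m k
  have habs : |ecoef m j₀ k| = e1 := by rw [heq j₀ hj₀1 le_rfl, abs_of_pos (by omega)]
  have hsplit : Icc 1 q = Icc 1 j₀ ∪ Icc (j₀+1) q := by
    ext x; simp only [mem_union, mem_Icc]; omega
  have hdisj : Disjoint (Icc 1 j₀) (Icc (j₀+1) q) := by
    rw [Finset.disjoint_left]; intro x; simp only [mem_Icc]; omega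
  have hc1 : ∑ j ∈ Icc 1 j₀, ecoef m j k = (j₀ : ℤ) * e1 := by
    rw [Finset.sum_congr rfl (fun j hj => heq j (mem_Icc.1 hj).1 (mem_Icc.1 hj).2),
      Finset.sum_const, Nat.card_Icc]
    simp only [Nat.add_sub_cancel, nsmul_eq_mul]
  have hc2 : ∀ j ∈ Icc (j₀+1) q, -((j₀:ℤ) * e1) ≤ ((m:ℤ) - j₀) * ecoef m j k := by
    intro j hj
    simp only [mem_Icc] at hj
    have hch := ecoef_chain m j₀ k hj₀1 hk j (by omega) (by omega)
    rw [habs] at hch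
    have h1 : (0:ℤ) ≤ (m:ℤ) - j₀ := by
      have : (j₀ : ℤ) ≤ m := by exact_mod_cast (by omega : j₀ ≤ m)
      omega
    have h2 := neg_abs_le (ecoef m j k)
    nlinarith
  have hsum2 : -(((q:ℤ) - j₀) * ((j₀:ℤ) * e1)) ≤ ((m:ℤ) - j₀) * ∑ j ∈ Icc (j₀+1) q, ecoef m j k := by
    rw [Finset.mul_sum]
    calc -(((q:ℤ) - j₀) * ((j₀:ℤ) * e1)) = ∑ _j ∈ Icc (j₀+1) q, -((j₀:ℤ) * e1) := by
          rw [Finset.sum_const, Nat.card_Icc, nsmul_eq_mul]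
          rw [(by omega : q + 1 - (j₀ + 1) = q - j₀), Nat.cast_sub hj₀q]
          ring
      _ ≤ _ := Finset.sum_le_sum hc2
  rw [hsplit, Finset.sum_union hdisj, mul_add, hc1]
  nlinarith [hsum2]

lemma dcoef_dvd (m : ℕ) (hm : 2 ≤ m) (k : ℕ → ℕ) : (m : ℤ) ∣ dcoef m k := by
  rw [← ZMod.intCast_zmod_eq_zero_iff_dvd]
  unfold dcoef
  have hcast : ∀ j ∈ Icc 1 (m/2 + 1), ((ecoef m j k : ℤ) : ZMod m)
      = ∏ r ∈ Icc 1 (m-1), (r : ZMod m) ^ (k r) := by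
    intro j hj
    simp only [mem_Icc] at hj
    exact ecoef_cast m j hj.1 (by omega) k
  have hsum : ((∑ j ∈ Icc 1 (m/2), ecoef m j k : ℤ) : ZMod m)
      = ((m/2 : ℕ) : ZMod m) * ∏ r ∈ Icc 1 (m-1), (r : ZMod m) ^ (k r) := by
    push_cast
    rw [Finset.sum_congr rfl (fun j hj => by
      simp only [mem_Icc] at hj
      exact ecoef_cast m j hj.1 (by omega) k)]
    rw [Finset.sum_const, Nat.card_Icc, nsmul_eq_mul]
    norm_num
  by_cases hpar : m % 2 = 0
  · rw [if_pos hpar]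
    push_cast [hsum]
    have h2 : ((2 : ZMod m)) * ((m/2 : ℕ) : ZMod m) = 0 := by
      have : ((2 * (m/2) : ℕ) : ZMod m) = ((m : ℕ) : ZMod m) := by congr 1; omega
      push_cast at this
      rw [this, ZMod.natCast_self]
    calc (2 : ZMod m) * (((m/2 : ℕ) : ZMod m) * ∏ r ∈ Icc 1 (m-1), (r : ZMod m) ^ (k r))
        = ((2 : ZMod m) * ((m/2 : ℕ) : ZMod m)) * ∏ r ∈ Icc 1 (m-1), (r : ZMod m) ^ (k r) := by ring
      _ = 0 := by rw [h2, zero_mul]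
  · rw [if_neg hpar]
    push_cast [hsum, ecoef_cast m (m/2+1) (by omega) (by omega) k]
    have h2 : (1 : ZMod m) + (2 : ZMod m) * ((m/2 : ℕ) : ZMod m) = 0 := by
      have : ((1 + 2 * (m/2) : ℕ) : ZMod m) = ((m : ℕ) : ZMod m) := by congr 1; omega
      push_cast at this
      rw [this, ZMod.natCast_self]
    calc ∏ r ∈ Icc 1 (m-1), (r : ZMod m) ^ (k r)
          + (2 : ZMod m) * (((m/2 : ℕ) : ZMod m) * ∏ r ∈ Icc 1 (m-1), (r : ZMod m) ^ (k r))
        = ((1 : ZMod m) + (2 : ZMod m) * ((m/2 : ℕ) : ZMod m)) * ∏ r ∈ Icc 1 (m-1), (r : ZMod m) ^ (k r) := by ring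
      _ = 0 := by rw [h2, zero_mul]

lemma dcoef_pos (m : ℕ) (hm : 2 ≤ m) (k : ℕ → ℕ) : 0 < dcoef m k := by
  unfold dcoef
  set p := m / 2 with hp
  set e1 := ecoef m 1 k with he1
  have he1pos : 1 ≤ e1 := one_le_ecoef_one m k
  have hp1 : 1 ≤ p := by omega
  by_cases hpar : m % 2 = 0
  · -- even case, m = 2p
    rw [if_pos hpar]
    have hm2p : m = 2 * p := by omega
    by_cases hex : ∃ j, 1 ≤ j ∧ j < p ∧ k (m - j) ≠ 0
    · set j₀ := Nat.find hex with hj₀def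
      obtain ⟨hj₀1, hj₀p, hj₀k⟩ := Nat.find_spec hex
      have hmin : ∀ j', 1 ≤ j' → j' < j₀ → k (m - j') = 0 := by
        intro j' h1 h2
        by_contra hc
        exact Nat.find_min hex h2 ⟨h1, by omega, hc⟩
      have heq : ∀ j, 1 ≤ j → j ≤ j₀ → ecoef m j k = e1 := by
        intro j h1 h2
        exact ecoef_eq_ecoef_one m k j h1 (by omega) (fun j' a b => hmin j' a (by omega))
      have hks := key_sum m k j₀ p hj₀1 (by omega) (by omega) heq hj₀k
      have hS : 0 < ∑ j ∈ Icc 1 p, ecoef m j k := by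
        have h1 : (0:ℤ) < ((m:ℤ) - p) * ((j₀ : ℤ) * e1) := by
          have ha : (p : ℤ) < m := by exact_mod_cast (by omega : p < m)
          have hb : (0:ℤ) < (j₀:ℤ) := by exact_mod_cast hj₀1
          exact mul_pos (by omega) (mul_pos hb (by omega))
        have h2 : (0:ℤ) < (m:ℤ) - j₀ := by
          have : (j₀ : ℤ) < m := by exact_mod_cast (by omega : j₀ < m)
          omega
        nlinarith
      omega
    · push_neg at hex
      have heq : ∀ j ∈ Icc 1 p, ecoef m j k = e1 := by
        intro j hj
        simp only [mem_Icc] at hj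
        exact ecoef_eq_ecoef_one m k j hj.1 (by omega)
          (fun j' a b => hex j' a (by omega))
      rw [Finset.sum_congr rfl heq, Finset.sum_const, Nat.card_Icc, nsmul_eq_mul]
      have : (0:ℤ) < ((p + 1 - 1 : ℕ) : ℤ) := by
        simp only [Nat.add_sub_cancel]
        exact_mod_cast hp1
      nlinarith
  · -- odd case, m = 2p+1
    rw [if_neg hpar]
    have hm2p : m = 2 * p + 1 := by omega
    by_cases hex : ∃ j, 1 ≤ j ∧ j ≤ p ∧ k (m - j) ≠ 0
    · set j₀ := Nat.find hex with hj₀def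
      obtain ⟨hj₀1, hj₀p, hj₀k⟩ := Nat.find_spec hex
      have hmin : ∀ j', 1 ≤ j' → j' < j₀ → k (m - j') = 0 := by
        intro j' h1 h2
        by_contra hc
        exact Nat.find_min hex h2 ⟨h1, by omega, hc⟩
      have heq : ∀ j, 1 ≤ j → j ≤ j₀ → ecoef m j k = e1 := by
        intro j h1 h2
        exact ecoef_eq_ecoef_one m k j h1 (by omega) (fun j' a b => hmin j' a (by omega))
      have hks := key_sum m k j₀ p hj₀1 hj₀p (by omega) heq hj₀k
      have hmid := ecoef_chain m j₀ k hj₀1 hj₀k (p+1) (by omega) (by omega)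
      have habsj₀ : |ecoef m j₀ k| = e1 := by
        rw [heq j₀ hj₀1 le_rfl, abs_of_pos (by omega)]
      rw [habsj₀] at hmid
      have h2 : (0:ℤ) < (m:ℤ) - j₀ := by
        have : (j₀ : ℤ) < m := by exact_mod_cast (by omega : j₀ < m)
        omega
    -- (m-j₀)*d = (m-j₀)*e^{p+1} + 2*(m-j₀)*S ≥ -j₀ e1 + 2(m-p) j₀ e1 = j₀ e1 (2(m-p)-1) > 0
      have hmidlb : -((j₀:ℤ) * e1) ≤ ((m:ℤ) - j₀) * ecoef m (p+1) k := by
        have := neg_abs_le (ecoef m (p+1) k)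
        nlinarith
      have harith : (0:ℤ) < (j₀:ℤ) * e1 * (2 * ((m:ℤ) - p) - 1) := by
        have h3 : (p : ℤ) + 1 ≤ m := by exact_mod_cast (by omega : p + 1 ≤ m)
        have h4 : (0:ℤ) < (j₀:ℤ) := by exact_mod_cast hj₀1
        exact mul_pos (mul_pos h4 (by omega)) (by omega)
      have hfinal : (0:ℤ) < ((m:ℤ) - j₀) *
          (ecoef m (p+1) k + 2 * ∑ j ∈ Icc 1 p, ecoef m j k) := by
        nlinarith
      nlinarith
    · push_neg at hex
      have heq : ∀ j ∈ Icc 1 (p+1), ecoef m j k = e1 := by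
        intro j hj
        simp only [mem_Icc] at hj
        exact ecoef_eq_ecoef_one m k j hj.1 (by omega)
          (fun j' a b => hex j' a (by omega))
      rw [Finset.sum_congr rfl (fun j hj => heq j (by simp only [mem_Icc] at *; omega)),
        heq (p+1) (by simp only [mem_Icc]; omega), Finset.sum_const, Nat.card_Icc, nsmul_eq_mul]
      have : (0:ℤ) ≤ ((p + 1 - 1 : ℕ) : ℤ) := by positivity
      nlinarith

/-- For all `m ≥ 2` and all nonnegative integers `k_1, …, k_{m-1}`, the
coefficient `d^{(m)}_{k_1,…,k_{m-1}}` is a positive integer divisible by `m`. -/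
theorem dcoef_pos_and_dvd (m : ℕ) (hm : 2 ≤ m) (k : ℕ → ℕ) :
    0 < dcoef m k ∧ (m : ℤ) ∣ dcoef m k :=
  ⟨dcoef_pos m hm k, dcoef_dvd m hm k⟩
end
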